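/- arXiv:1603.07471 — 6 statements merged into one kernel-verified Lean document; each statement's English description precedes it below -/
import Mathlib

section
/- Let p be an odd prime, q = p^h, and n ≥ 3. The orbits of the group M on 𝔽_q^n are exactly the four sets {0}, S_0, S_+, and S_−. Equivalently: each of S_0, S_+, S_− is invariant under every map x ↦ a·x·A with a ∈ 𝔽_q^×, A·Aᵀ = I, and for any two nonzero points x, y ∈ 𝔽_q^n lying in the same one of the sets S_0, S_+, S_−, there exist a ∈ 𝔽_q^× and A ∈ GL(n,q) with A·Aᵀ = I such that y = a·x·A. -/
open Matrix

namespace MOrbitsAux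

variable {n : ℕ} {F : Type} [Field F]

lemma vecMulVec_transpose (w : Fin n → F) : (vecMulVec w w)ᵀ = vecMulVec w w := by
  ext i j; simp [vecMulVec_apply, Matrix.transpose_apply, mul_comm]

lemma vecMulVec_sq (w : Fin n → F) :
    vecMulVec w w * vecMulVec w w = (w ⬝ᵥ w) • vecMulVec w w := by
  ext i j
  simp only [Matrix.mul_apply, vecMulVec_apply, Matrix.smul_apply, dotProduct,
    smul_eq_mul, Finset.sum_mul]
  exact Finset.sum_congr rfl fun k _ => by ring

lemma vecMul_smulM (x : Fin n → F) (c : F) (M : Matrix (Fin n) (Fin n) F) :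
    x ᵥ* (c • M) = c • (x ᵥ* M) := by
  ext j
  simp only [vecMul, dotProduct, Matrix.smul_apply, Pi.smul_apply, smul_eq_mul]
  rw [Finset.mul_sum]
  exact Finset.sum_congr rfl fun k _ => by ring

lemma vecMul_vecMulVec (x w : Fin n → F) :
    x ᵥ* vecMulVec w w = (x ⬝ᵥ w) • w := by
  ext j
  simp only [vecMul, dotProduct, vecMulVec_apply, Pi.smul_apply, smul_eq_mul,
    Finset.sum_mul]
  exact Finset.sum_congr rfl fun k _ => by ring

/-- reflection matrix in direction `w` -/
noncomputable def reflM (w : Fin n → F) : Matrix (Fin n) (Fin n) F :=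
  1 - (2 / (w ⬝ᵥ w)) • vecMulVec w w

lemma reflM_ortho (w : Fin n → F) (hw : w ⬝ᵥ w ≠ 0) :
    reflM w * (reflM w)ᵀ = 1 := by
  have hT : (reflM w)ᵀ = reflM w := by
    simp [reflM, Matrix.transpose_sub, Matrix.transpose_smul, vecMulVec_transpose]
  rw [hT]
  set c : F := 2 / (w ⬝ᵥ w) with hc
  set M : Matrix (Fin n) (Fin n) F := vecMulVec w w with hMdef
  have hM : M * M = (w ⬝ᵥ w) • M := vecMulVec_sq w
  have hcc : c * c * (w ⬝ᵥ w) = c + c := by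
    rw [hc]; field_simp; ring
  have step : reflM w = 1 - c • M := rfl
  simp only [step, Matrix.sub_mul, Matrix.mul_sub, Matrix.one_mul, Matrix.mul_one,
    Matrix.smul_mul, Matrix.mul_smul, smul_smul]
  simp only [hM, smul_smul, smul_sub]
  rw [show c * (c * (w ⬝ᵥ w)) = c + c from by rw [← mul_assoc]; exact hcc, add_smul]
  abel

lemma vecMul_reflM (x w : Fin n → F) :
    x ᵥ* reflM w = x - (2 / (w ⬝ᵥ w) * (x ⬝ᵥ w)) • w := by
  rw [reflM, Matrix.vecMul_sub, Matrix.vecMul_one, vecMul_smulM, vecMul_vecMulVec,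
    smul_smul]

/-- one reflection sends `u` to `v` when they have the same norm and `u - v` is
anisotropic. -/
lemma reflect_to (u v : Fin n → F) (huv : u ⬝ᵥ u = v ⬝ᵥ v)
    (hne : (u - v) ⬝ᵥ (u - v) ≠ 0) :
    ∃ A : Matrix (Fin n) (Fin n) F, A * Aᵀ = 1 ∧ u ᵥ* A = v := by
  refine ⟨reflM (u - v), reflM_ortho _ hne, ?_⟩
  rw [vecMul_reflM]
  have hdd : (u - v) ⬝ᵥ (u - v) = 2 * (u ⬝ᵥ (u - v)) := by
    simp only [dotProduct_sub, sub_dotProduct]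
    rw [dotProduct_comm v u, huv]; ring
  have h1 : 2 / ((u - v) ⬝ᵥ (u - v)) * (u ⬝ᵥ (u - v)) = 1 := by
    rw [hdd, div_mul_eq_mul_div, ← hdd]
    exact div_self hne
  rw [h1, one_smul, sub_sub_cancel]

lemma ortho_mul {A B : Matrix (Fin n) (Fin n) F} (hA : A * Aᵀ = 1) (hB : B * Bᵀ = 1) :
    (A * B) * (A * B)ᵀ = 1 := by
  rw [Matrix.transpose_mul, Matrix.mul_assoc, ← Matrix.mul_assoc B, hB, Matrix.one_mul, hA]

lemma ortho_neg {A : Matrix (Fin n) (Fin n) F} (hA : A * Aᵀ = 1) :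
    (-A) * (-A)ᵀ = 1 := by
  rw [Matrix.transpose_neg, Matrix.neg_mul, Matrix.mul_neg, neg_neg, hA]

/-- hyperbolic partner: given an isotropic `u` with `u i ≠ 0`, produce an isotropic
`m` with `u ⬝ᵥ m = u i`. -/
lemma isotropic_partner (h2 : (2 : F) ≠ 0) (u : Fin n → F) (hQ : u ⬝ᵥ u = 0)
    (i : Fin n) (hi : u i ≠ 0) :
    ∃ m : Fin n → F, m ⬝ᵥ m = 0 ∧ u ⬝ᵥ m = u i := by
  classical
  set e : Fin n → F := Pi.single i 1 with he
  have heu : u ⬝ᵥ e = u i := by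
    simp [he, dotProduct, Pi.single_apply, mul_ite, Finset.sum_ite_eq']
  have heu' : e ⬝ᵥ u = u i := by rw [dotProduct_comm, heu]
  refine ⟨e - ((e ⬝ᵥ e) / (2 * u i)) • u, ?_, ?_⟩
  · simp only [dotProduct_sub, sub_dotProduct, dotProduct_smul, smul_dotProduct,
      smul_eq_mul, hQ, heu, heu']
    field_simp
    ring
  · simp only [dotProduct_sub, dotProduct_smul, smul_eq_mul, hQ, heu]
    ring

/-- transitivity of the orthogonal group on nonzero vectors of the same norm. -/
lemma witt (h2 : (2 : F) ≠ 0) (u v : Fin n → F) (hu : u ≠ 0) (hv : v ≠ 0)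
    (huv : u ⬝ᵥ u = v ⬝ᵥ v) :
    ∃ A : Matrix (Fin n) (Fin n) F, A * Aᵀ = 1 ∧ u ᵥ* A = v := by
  by_cases hsub : (u - v) ⬝ᵥ (u - v) ≠ 0
  · exact reflect_to u v huv hsub
  by_cases hadd : (u + v) ⬝ᵥ (u + v) ≠ 0
  · have huv' : u ⬝ᵥ u = (-v) ⬝ᵥ (-v) := by rwa [neg_dotProduct, dotProduct_neg, neg_neg]
    have hne : (u - -v) ⬝ᵥ (u - -v) ≠ 0 := by rwa [sub_neg_eq_add]
    obtain ⟨A, hA, hAu⟩ := reflect_to u (-v) huv' hne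
    exact ⟨-A, ortho_neg hA, by rw [Matrix.vecMul_neg, hAu, neg_neg]⟩
  push_neg at hsub hadd
  -- derive `u ⬝ᵥ u = 0`, `u ⬝ᵥ v = 0`, `v ⬝ᵥ v = 0`
  have hvu : v ⬝ᵥ u = u ⬝ᵥ v := dotProduct_comm v u
  have hsub' : u ⬝ᵥ u + u ⬝ᵥ u - (u ⬝ᵥ v + u ⬝ᵥ v) = 0 := by
    have := hsub
    simp only [dotProduct_sub, sub_dotProduct, hvu, huv] at this
    rw [← huv] at this
    linear_combination this
  have hadd' : u ⬝ᵥ u + u ⬝ᵥ u + (u ⬝ᵥ v + u ⬝ᵥ v) = 0 := by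
    have := hadd
    simp only [dotProduct_add, add_dotProduct, hvu, huv] at this
    rw [← huv] at this
    linear_combination this
  have hQu : u ⬝ᵥ u = 0 := by
    have h4 : (2 : F) * (2 * (u ⬝ᵥ u)) = 0 := by linear_combination hsub' + hadd'
    rcases mul_eq_zero.mp h4 with h | h
    · exact absurd h h2
    rcases mul_eq_zero.mp h with h | h
    · exact absurd h h2
    exact h
  have hB : u ⬝ᵥ v = 0 := by
    have h4 : (2 : F) * (u ⬝ᵥ v) = 0 := by linear_combination hadd' - (2:F) * hQu
    rcases mul_eq_zero.mp h4 with h | h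
    · exact absurd h h2
    exact h
  have hQv : v ⬝ᵥ v = 0 := by rw [← huv, hQu]
  -- find a common "witness" m : isotropic, non-orthogonal to both u and v
  obtain ⟨i, hi⟩ := Function.ne_iff.mp hu
  obtain ⟨j, hj⟩ := Function.ne_iff.mp hv
  simp only [Pi.zero_apply] at hi hj
  obtain ⟨m₀, hm₀Q, hm₀u⟩ := isotropic_partner h2 u hQu i hi
  obtain ⟨m₁, hm₁Q, hm₁v⟩ := isotropic_partner h2 v hQv j hj
  have key : ∃ m : Fin n → F, m ⬝ᵥ m = 0 ∧ u ⬝ᵥ m ≠ 0 ∧ v ⬝ᵥ m ≠ 0 := by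
    by_cases hvm₀ : v ⬝ᵥ m₀ ≠ 0
    · exact ⟨m₀, hm₀Q, by rw [hm₀u]; exact hi, hvm₀⟩
    by_cases hum₁ : u ⬝ᵥ m₁ ≠ 0
    · exact ⟨m₁, hm₁Q, hum₁, by rw [hm₁v]; exact hj⟩
    push_neg at hvm₀ hum₁
    refine ⟨m₀ + m₁ + (-(m₀ ⬝ᵥ m₁) / u i) • u, ?_, ?_, ?_⟩
    · have h01 : m₁ ⬝ᵥ m₀ = m₀ ⬝ᵥ m₁ := dotProduct_comm _ _
      have hm₀u' : m₀ ⬝ᵥ u = u i := by rw [dotProduct_comm, hm₀u]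
      have hm₁u' : m₁ ⬝ᵥ u = 0 := by rw [dotProduct_comm, hum₁]
      have hum₀ : u ⬝ᵥ m₀ = u i := hm₀u
      simp only [dotProduct_add, add_dotProduct, dotProduct_smul, smul_dotProduct,
        smul_eq_mul, hm₀Q, hm₁Q, hQu, h01, hm₀u', hm₁u', hum₁, hum₀]
      field_simp
      ring
    · have hum₀ : u ⬝ᵥ m₀ = u i := hm₀u
      simp only [dotProduct_add, dotProduct_smul, smul_eq_mul, hum₀, hum₁, hQu]
      intro hcon
      apply hi
      linear_combination hcon
    · have hvu' : v ⬝ᵥ u = 0 := by rw [dotProduct_comm]; exact hB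
      simp only [dotProduct_add, dotProduct_smul, smul_eq_mul, hvm₀, hm₁v, hvu']
      intro hcon
      apply hj
      linear_combination hcon
  obtain ⟨m, hmQ, hum, hvm⟩ := key
  have humm : (u - m) ⬝ᵥ (u - m) ≠ 0 := by
    simp only [dotProduct_sub, sub_dotProduct, hQu, hmQ, dotProduct_comm m u]
    intro hcon
    apply hum
    have : (2 : F) * (u ⬝ᵥ m) = 0 := by linear_combination -hcon
    rcases mul_eq_zero.mp this with h | h
    · exact absurd h h2
    · exact h
  have hmvv : (m - v) ⬝ᵥ (m - v) ≠ 0 := by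
    simp only [dotProduct_sub, sub_dotProduct, hQv, hmQ, dotProduct_comm v m]
    intro hcon
    apply hvm
    have h' : (2 : F) * (m ⬝ᵥ v) = 0 := by linear_combination -hcon
    rcases mul_eq_zero.mp h' with h | h
    · exact absurd h h2
    · rw [dotProduct_comm]; exact h
  obtain ⟨A₁, hA₁, hA₁u⟩ := reflect_to u m (by rw [hQu, hmQ]) humm
  obtain ⟨A₂, hA₂, hA₂m⟩ := reflect_to m v (by rw [hmQ, hQv]) hmvv
  exact ⟨A₁ * A₂, ortho_mul hA₁ hA₂, by rw [← Matrix.vecMul_vecMul, hA₁u, hA₂m]⟩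

lemma sum_sq_eq_dot (z : Fin n → F) : (∑ i, z i ^ 2) = z ⬝ᵥ z := by
  simp [dotProduct, sq]

lemma dot_vecMul_self {A : Matrix (Fin n) (Fin n) F} (hA : A * Aᵀ = 1) (x : Fin n → F) :
    (x ᵥ* A) ⬝ᵥ (x ᵥ* A) = x ⬝ᵥ x := by
  calc (x ᵥ* A) ⬝ᵥ (x ᵥ* A) = (x ᵥ* A) ⬝ᵥ (Aᵀ *ᵥ x) := by rw [Matrix.mulVec_transpose]
    _ = ((x ᵥ* A) ᵥ* Aᵀ) ⬝ᵥ x := dotProduct_mulVec _ _ _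
    _ = (x ᵥ* (A * Aᵀ)) ⬝ᵥ x := by rw [Matrix.vecMul_vecMul]
    _ = x ⬝ᵥ x := by rw [hA, Matrix.vecMul_one]

lemma smul_dot_self (a : F) (z : Fin n → F) : (a • z) ⬝ᵥ (a • z) = a ^ 2 * (z ⬝ᵥ z) := by
  rw [smul_dotProduct, dotProduct_smul, smul_eq_mul, smul_eq_mul, sq]; ring

lemma vecMul_ne_zero {A : Matrix (Fin n) (Fin n) F} (hA : A * Aᵀ = 1) {x : Fin n → F}
    (hx : x ≠ 0) : x ᵥ* A ≠ 0 := by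
  intro h0
  apply hx
  have : x ᵥ* (A * Aᵀ) = (x ᵥ* A) ᵥ* Aᵀ := (Matrix.vecMul_vecMul _ _ _).symm
  rw [hA, Matrix.vecMul_one, h0, Matrix.zero_vecMul] at this
  exact this

end MOrbitsAux

open MOrbitsAux in


/-- Let `p` be an odd prime, `q = p^h`, `n ≥ 3`. The orbits of
the group `M = {x ↦ a·x·A : a ∈ 𝔽_q^×, A·Aᵀ = I}` on `𝔽_q^n` are exactly
`{0}`, `S_0`, `S_+`, `S_-`: each of `S_0`, `S_+`, `S_-` is invariant under
every such map, and any two points in the same one of these sets are related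
by such a map. Here `Q(x) = ∑ x_i²`, `S_0 = {x ≠ 0 : Q(x) = 0}`,
`S_+ = {x : Q(x) a nonzero square}`, `S_- = {x : Q(x) not a square}`. -/
theorem M_orbits
    (p h n : ℕ) (hp : p.Prime) (hodd : Odd p) (hn : 3 ≤ n)
    (q : ℕ) (hq : q = p ^ h)
    (F : Type) [Field F] [Fintype F] (hF : Fintype.card F = q) :
    (∀ (a : F) (A : Matrix (Fin n) (Fin n) F), a ≠ 0 → A * A.transpose = 1 →
      ∀ x : Fin n → F,
        (((∑ i, x i ^ 2) = 0 ∧ x ≠ 0) →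
          ((∑ i, (a • Matrix.vecMul x A) i ^ 2) = 0 ∧ a • Matrix.vecMul x A ≠ 0)) ∧
        ((IsSquare (∑ i, x i ^ 2) ∧ (∑ i, x i ^ 2) ≠ 0) →
          (IsSquare (∑ i, (a • Matrix.vecMul x A) i ^ 2) ∧
            (∑ i, (a • Matrix.vecMul x A) i ^ 2) ≠ 0)) ∧
        (¬ IsSquare (∑ i, x i ^ 2) →
          ¬ IsSquare (∑ i, (a • Matrix.vecMul x A) i ^ 2)))
    ∧
    (∀ x y : Fin n → F,
      ((((∑ i, x i ^ 2) = 0 ∧ x ≠ 0) ∧ ((∑ i, y i ^ 2) = 0 ∧ y ≠ 0)) ∨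
       ((IsSquare (∑ i, x i ^ 2) ∧ (∑ i, x i ^ 2) ≠ 0) ∧
        (IsSquare (∑ i, y i ^ 2) ∧ (∑ i, y i ^ 2) ≠ 0)) ∨
       (¬ IsSquare (∑ i, x i ^ 2) ∧ ¬ IsSquare (∑ i, y i ^ 2))) →
      ∃ (a : F) (A : Matrix (Fin n) (Fin n) F),
        a ≠ 0 ∧ A * A.transpose = 1 ∧ y = a • Matrix.vecMul x A) := by
  classical
  -- the characteristic of `F` is odd
  have h2F : (2 : F) ≠ 0 := by
    intro h20
    have hdvd : ringChar F ∣ 2 := ringChar.dvd (by exact_mod_cast h20)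
    have hprime : (ringChar F).Prime := CharP.char_is_prime F (ringChar F)
    have hr2 : ringChar F = 2 := (Nat.prime_dvd_prime_iff_eq hprime Nat.prime_two).mp hdvd
    haveI : CharP F 2 := hr2 ▸ ringChar.charP F
    obtain ⟨k, hk⟩ := FiniteField.card F 2
    rw [hF, hq] at hk
    have hpow : p ∣ 2 ^ (k : ℕ) := by
      rw [← hk.2]
      refine dvd_pow_self p ?_
      intro hh0
      rw [hh0, pow_zero] at hk
      have := Nat.one_lt_two_pow_iff.mpr (k.ne_zero)
      omega
    have := (Nat.Prime.dvd_of_dvd_pow hp hpow)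
    have hp2 : p = 2 := (Nat.prime_dvd_prime_iff_eq hp Nat.prime_two).mp this
    rw [hp2] at hodd
    exact (Nat.not_odd_iff_even.mpr even_two) hodd
  constructor
  · -- invariance
    intro a A ha hA x
    have hsum : (∑ i, (a • (x ᵥ* A)) i ^ 2) = a ^ 2 * (∑ i, x i ^ 2) := by
      rw [sum_sq_eq_dot, sum_sq_eq_dot, smul_dot_self, dot_vecMul_self hA]
    refine ⟨?_, ?_, ?_⟩
    · rintro ⟨hQ, hx⟩
      refine ⟨by rw [hsum, hQ, mul_zero], ?_⟩
      intro h0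
      rcases smul_eq_zero.mp h0 with h | h
      · exact ha h
      · exact vecMul_ne_zero hA hx h
    · rintro ⟨hSq, hQ⟩
      obtain ⟨r, hr⟩ := hSq
      refine ⟨⟨a * r, by rw [hsum, hr]; ring⟩, ?_⟩
      rw [hsum]
      exact mul_ne_zero (pow_ne_zero 2 ha) hQ
    · intro hN hSq
      apply hN
      obtain ⟨r, hr⟩ := hSq
      rw [hsum] at hr
      refine ⟨r / a, ?_⟩
      field_simp at hr ⊢
      linear_combination hr
  · -- transitivity
    intro x y hcase
    have main : ∀ x y : Fin n → F, x ≠ 0 → y ≠ 0 →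
        (∃ a : F, a ≠ 0 ∧ a ^ 2 * (∑ i, x i ^ 2) = (∑ i, y i ^ 2)) →
        ∃ (a : F) (A : Matrix (Fin n) (Fin n) F),
          a ≠ 0 ∧ A * A.transpose = 1 ∧ y = a • Matrix.vecMul x A := by
      intro x y hx hy ⟨a, ha, haQ⟩
      have hu : a • x ≠ 0 := smul_ne_zero ha hx
      have huv : (a • x) ⬝ᵥ (a • x) = y ⬝ᵥ y := by
        rw [smul_dot_self, ← sum_sq_eq_dot, ← sum_sq_eq_dot, haQ]
      obtain ⟨A, hAo, hAv⟩ := witt h2F (a • x) y hu hy huv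
      refine ⟨a, A, ha, hAo, ?_⟩
      rw [← hAv, Matrix.smul_vecMul]
    rcases hcase with ⟨⟨hx0, hx⟩, ⟨hy0, hy⟩⟩ | ⟨⟨hxS, hxQ⟩, ⟨hyS, hyQ⟩⟩ | ⟨hxN, hyN⟩
    · exact main x y hx hy ⟨1, one_ne_zero, by rw [hx0, hy0, mul_zero]⟩
    · have hx : x ≠ 0 := by
        intro h0; apply hxQ; rw [h0]; simp
      have hy : y ≠ 0 := by
        intro h0; apply hyQ; rw [h0]; simp
      obtain ⟨r, hr⟩ := hxS
      obtain ⟨s, hs⟩ := hyS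
      have hrne : r ≠ 0 := by intro h0; apply hxQ; rw [hr, h0, mul_zero]
      refine main x y hx hy ⟨s / r, ?_, ?_⟩
      · intro h0
        apply hyQ
        rw [hs]
        rcases div_eq_zero_iff.mp h0 with h | h
        · rw [h, mul_zero]
        · exact absurd h hrne
      · rw [hr, hs]; field_simp
    · have hxQ : (∑ i, x i ^ 2) ≠ 0 := fun h0 => hxN (h0 ▸ IsSquare.zero)
      have hyQ : (∑ i, y i ^ 2) ≠ 0 := fun h0 => hyN (h0 ▸ IsSquare.zero)
      have hx : x ≠ 0 := by intro h0; apply hxQ; rw [h0]; simp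
      have hy : y ≠ 0 := by intro h0; apply hyQ; rw [h0]; simp
      -- the ratio of two nonsquares is a square
      have hratio : IsSquare ((∑ i, y i ^ 2) * (∑ i, x i ^ 2)⁻¹) := by
        set c := ∑ i, x i ^ 2
        set d := ∑ i, y i ^ 2
        have hcx : quadraticChar F c = -1 := quadraticChar_neg_one_iff_not_isSquare.mpr hxN
        have hcy : quadraticChar F d = -1 := quadraticChar_neg_one_iff_not_isSquare.mpr hyN
        have hinv : quadraticChar F c * quadraticChar F c⁻¹ = 1 := by
          rw [← _root_.map_mul, mul_inv_cancel₀ hxQ, _root_.map_one]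
        rw [hcx] at hinv
        have hcinv : quadraticChar F c⁻¹ = -1 := by linarith
        have hmul : quadraticChar F (d * c⁻¹) = 1 := by
          rw [_root_.map_mul, hcy, hcinv]; ring
        have hne : d * c⁻¹ ≠ 0 := mul_ne_zero hyQ (inv_ne_zero hxQ)
        exact (quadraticChar_one_iff_isSquare hne).mp hmul
      obtain ⟨r, hr⟩ := hratio
      have hrne : r ≠ 0 := by
        intro h0
        rw [h0, mul_zero] at hr
        exact mul_ne_zero hyQ (inv_ne_zero hxQ) hr
      refine main x y hx hy ⟨r, hrne, ?_⟩
      rw [sq, ← hr]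
      field_simp
end

section
/- Let p be an odd prime, q = p^h, and n ≥ 3. The group EM of all transformations of 𝔽_q^n of the form x ↦ a·x·A + b, where a ∈ 𝔽_q^×, A ∈ GL(n,q) with A·Aᵀ = I, and b ∈ 𝔽_q^n, acts primitively on 𝔽_q^n (it is transitive and preserves no nontrivial proper partition of 𝔽_q^n into blocks). -/
lemma permMatrix_orthog {n : Type*} [Fintype n] [DecidableEq n] (F : Type*) [Field F]
    (σ : Equiv.Perm n) : σ.permMatrix F * (σ.permMatrix F).transpose = 1 := by
  rw [← PEquiv.toMatrix_symm, ← Equiv.toPEquiv_symm, ← PEquiv.toMatrix_trans,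
    ← Equiv.toPEquiv_trans]
  simp

lemma vecMul_permMatrix {n : Type*} [Fintype n] [DecidableEq n] {F : Type*} [Field F]
    (σ : Equiv.Perm n) (v : n → F) (j : n) :
    Matrix.vecMul v (σ.permMatrix F) j = v (σ.symm j) := by
  classical
  simp only [Matrix.vecMul, dotProduct, PEquiv.toMatrix_apply, Equiv.toPEquiv_apply,
    Option.mem_def, Option.some.injEq, mul_ite, mul_one, mul_zero]
  simp_rw [Equiv.apply_eq_iff_eq_symm_apply]
  rw [Finset.sum_ite_eq' Finset.univ (σ.symm j)]
  simp

/-- Let `p` be an odd prime, `q = p^h`, `n ≥ 3`. The group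
`EM` of transformations `x ↦ a·x·A + b` (with `a ∈ 𝔽_q^×`, `A·Aᵀ = I`,
`b ∈ 𝔽_q^n`) acts primitively on `𝔽_q^n`: it is transitive, and any subset
`B ⊆ 𝔽_q^n` which is a block (every element of `EM` maps `B` either onto
itself or to a set disjoint from `B`) is a singleton-or-empty set or all of
`𝔽_q^n`. -/
theorem EM_primitive
    (p h n : ℕ) (hp : p.Prime) (hodd : Odd p) (hn : 3 ≤ n)
    (q : ℕ) (hq : q = p ^ h)
    (F : Type) [Field F] [Fintype F] (hF : Fintype.card F = q) :
    (∀ x y : Fin n → F,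
      ∃ (a : F) (A : Matrix (Fin n) (Fin n) F) (b : Fin n → F),
        a ≠ 0 ∧ A * A.transpose = 1 ∧ a • Matrix.vecMul x A + b = y)
    ∧
    (∀ B : Set (Fin n → F),
      (∀ (a : F) (A : Matrix (Fin n) (Fin n) F) (b : Fin n → F),
        a ≠ 0 → A * A.transpose = 1 →
        ((fun x : Fin n → F => a • Matrix.vecMul x A + b) '' B = B ∨
          Disjoint ((fun x : Fin n → F => a • Matrix.vecMul x A + b) '' B) B)) →
      B.Subsingleton ∨ B = Set.univ) := by
  have hchar : (2 : F) ≠ 0 := by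
    intro h2
    have hprime : (ringChar F).Prime := CharP.char_is_prime F (ringChar F)
    have hdvd : ringChar F ∣ 2 := (ringChar.spec F 2).mp (by exact_mod_cast h2)
    have h22 : ringChar F = 2 := (Nat.prime_dvd_prime_iff_eq hprime Nat.prime_two).mp hdvd
    haveI : Fact (Nat.Prime 2) := ⟨Nat.prime_two⟩
    have hdvd2 : (2 : ℕ) ∣ Fintype.card F :=
      (prime_dvd_char_iff_dvd_card 2).mp (h22 ▸ dvd_refl (ringChar F))
    rw [hF, hq] at hdvd2
    have hp2 : (2 : ℕ) ∣ p := Nat.Prime.dvd_of_dvd_pow Nat.prime_two hdvd2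
    have := Nat.odd_iff.mp hodd
    omega
  constructor
  · intro x y
    exact ⟨1, 1, y - x, one_ne_zero, by simp, by simp [Matrix.vecMul_one]⟩
  · intro B hB
    by_cases hBs : B.Subsingleton
    · exact Or.inl hBs
    right
    rw [Set.not_subsingleton_iff] at hBs
    obtain ⟨x, hx, y, hy, hxy⟩ := hBs
    -- key: if the image meets B at one point, it maps all of B into B
    have key : ∀ (a : F) (A : Matrix (Fin n) (Fin n) F) (b : Fin n → F),
        a ≠ 0 → A * A.transpose = 1 →
        (∃ z ∈ B, a • Matrix.vecMul z A + b ∈ B) →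
        ∀ w ∈ B, a • Matrix.vecMul w A + b ∈ B := by
      intro a A b ha hA hz w hw
      rcases hB a A b ha hA with heq | hdisj
      · rw [← heq]; exact ⟨w, hw, rfl⟩
      · obtain ⟨z, hzB, hzB'⟩ := hz
        exact absurd hzB' (Set.disjoint_left.mp hdisj ⟨z, hzB, rfl⟩)
    have trans : ∀ u ∈ B, ∀ v ∈ B, ∀ w ∈ B, w + (v - u) ∈ B := by
      intro u hu v hv w hw
      have := key 1 1 (v - u) one_ne_zero (by simp)
        ⟨u, hu, by simpa [Matrix.vecMul_one] using hv⟩ w hw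
      simpa [Matrix.vecMul_one] using this
    -- H is the set of vectors h with x + h ∈ B; it is a submodule
    have hsmul : ∀ (a : F), a ≠ 0 → ∀ w ∈ B, a • w + (x - a • x) ∈ B := by
      intro a ha w hw
      have := key a 1 (x - a • x) ha (by simp)
        ⟨x, hx, by simpa [Matrix.vecMul_one] using hx⟩ w hw
      simpa [Matrix.vecMul_one] using this
    have horth : ∀ (A : Matrix (Fin n) (Fin n) F), A * A.transpose = 1 →
        ∀ w ∈ B, Matrix.vecMul w A + (x - Matrix.vecMul x A) ∈ B := by
      intro A hA w hw
      have := key 1 A (x - Matrix.vecMul x A) one_ne_zero hA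
        ⟨x, hx, by simpa using hx⟩ w hw
      simpa using this
    have Hadd : ∀ g₁ ∈ {v : Fin n → F | x + v ∈ B}, ∀ g₂ ∈ {v : Fin n → F | x + v ∈ B},
        g₁ + g₂ ∈ {v : Fin n → F | x + v ∈ B} := by
      intro g₁ h₁ g₂ h₂
      have := trans x hx (x + g₂) h₂ (x + g₁) h₁
      simpa [add_assoc, add_sub_cancel_left] using this
    have Hsmul : ∀ (c : F), ∀ g ∈ {v : Fin n → F | x + v ∈ B},
        c • g ∈ {v : Fin n → F | x + v ∈ B} := by
      intro c g hg
      by_cases hc : c = 0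
      · simpa [hc] using hx
      · have := hsmul c hc (x + g) hg
        have e : c • (x + g) + (x - c • x) = x + c • g := by
          rw [smul_add]; abel
        show x + c • g ∈ B
        rw [← e]; exact this
    have Horth : ∀ (A : Matrix (Fin n) (Fin n) F), A * A.transpose = 1 →
        ∀ g ∈ {v : Fin n → F | x + v ∈ B},
        Matrix.vecMul g A ∈ {v : Fin n → F | x + v ∈ B} := by
      intro A hA g hg
      have := horth A hA (x + g) hg
      have e : Matrix.vecMul (x + g) A + (x - Matrix.vecMul x A)
          = x + Matrix.vecMul g A := by
        rw [Matrix.add_vecMul]; abel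
      simpa [e] using this
    let H : Submodule F (Fin n → F) :=
      { carrier := {v : Fin n → F | x + v ∈ B}
        add_mem' := fun ha hb => Hadd _ ha _ hb
        zero_mem' := by simpa using hx
        smul_mem' := fun c g hg => Hsmul c g hg }
    -- the difference d = y - x is a nonzero element of H
    have hdH : y - x ∈ H := by
      show x + (y - x) ∈ B
      simpa using hy
    have hdne : y - x ≠ 0 := sub_ne_zero.mpr (Ne.symm hxy)
    obtain ⟨i, hi⟩ := Function.ne_iff.mp hdne
    set d : Fin n → F := y - x with hd
    have hdi : d i ≠ 0 := by simpa using hi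
    -- negation matrix at coordinate i
    have hNi : (Matrix.diagonal (fun j => if j = i then (-1 : F) else 1)) *
        (Matrix.diagonal (fun j => if j = i then (-1 : F) else 1)).transpose = 1 := by
      rw [Matrix.diagonal_transpose, Matrix.diagonal_mul_diagonal]
      convert Matrix.diagonal_one with j
      by_cases hj : j = i <;> simp [hj]
    have hsingle : Pi.single i (2 * d i) ∈ H := by
      have h1 : Matrix.vecMul d (Matrix.diagonal (fun j => if j = i then (-1 : F) else 1))
          ∈ H := Horth _ hNi d hdH
      have h2 : d - Matrix.vecMul d (Matrix.diagonal (fun j => if j = i then (-1 : F) else 1))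
          ∈ H := by
        have := H.add_mem hdH (H.smul_mem (-1) h1)
        simpa [sub_eq_add_neg] using this
      convert h2 using 1
      funext j
      by_cases hj : j = i
      · subst hj
        simp only [Pi.single_apply, if_pos rfl, Pi.sub_apply, Matrix.vecMul_diagonal,
          if_true, eq_self_iff_true]
        ring
      · simp [Pi.single_apply, hj, Matrix.vecMul_diagonal]
    have hsingle' : ∀ (c : F) (j : Fin n), Pi.single j c ∈ H := by
      intro c j
      by_cases hc : c = 0
      · simpa [hc] using H.zero_mem
      have hic : Pi.single i c ∈ H := by
        have := H.smul_mem (c * (2 * d i)⁻¹) hsingle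
        convert this using 1
        funext k
        rcases eq_or_ne k i with rfl | hk
        · simp only [Pi.single_apply, if_pos rfl, if_true, Pi.smul_apply, smul_eq_mul]
          field_simp
        · simp [Pi.single_apply, hk]
      have : Matrix.vecMul (Pi.single i c) (Equiv.Perm.permMatrix F (Equiv.swap i j)) ∈ H :=
        Horth _ (permMatrix_orthog F (Equiv.swap i j)) _ hic
      convert this using 1
      funext k
      rw [vecMul_permMatrix]
      rcases eq_or_ne k j with rfl | hk
      · simp [Pi.single_apply, Equiv.swap_apply_right]
      · have : Equiv.swap i j k ≠ i := by
          intro hswap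
          have h3 : (Equiv.swap i j) k = (Equiv.swap i j) j := by
            rw [hswap, Equiv.swap_apply_right]
          exact hk ((Equiv.swap i j).injective h3)
        simp [Pi.single_apply, hk, Equiv.symm_swap, this]
    -- every vector is a sum of singles, so H = ⊤, B = univ
    have hall : ∀ w : Fin n → F, w ∈ H := by
      intro w
      have : w = ∑ j : Fin n, Pi.single j (w j) := by
        rw [Finset.univ_sum_single]
      rw [this]
      exact H.sum_mem fun j _ => hsingle' (w j) j
    rw [Set.eq_univ_iff_forall]
    intro z
    have := hall (z - x)
    show z ∈ B
    have h' : x + (z - x) ∈ B := this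
    simpa using h'
end

section
/- Let p be an odd prime, q = p^h, and n ≥ 3. The set S_0 = { x ∈ 𝔽_q^n : x ≠ 0 and Σ_{i=1}^n x_i² = 0 } spans 𝔽_q^n as an 𝔽_q-vector space. -/
/-- Let `p` be an odd prime, `q = p^h`, `n ≥ 3`. The set
`S_0 = {x ∈ 𝔽_q^n : x ≠ 0, ∑ x_i² = 0}` spans `𝔽_q^n` over `𝔽_q`. -/
theorem S0_spans
    (p h n : ℕ) (hp : p.Prime) (hodd : Odd p) (hn : 3 ≤ n)
    (q : ℕ) (hq : q = p ^ h)
    (F : Type) [Field F] [Fintype F] (hF : Fintype.card F = q) :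
    Submodule.span F {x : Fin n → F | x ≠ 0 ∧ (∑ i, x i ^ 2) = 0} = ⊤ := by
  set c := ringChar F with hc
  haveI : CharP F c := ringChar.charP F
  obtain ⟨m, hcprime, hcard⟩ := FiniteField.card F c
  haveI : NeZero c := ⟨hcprime.ne_zero⟩
  rw [hF, hq] at hcard
  have hcp : c = p := by
    have hh : h ≠ 0 := by
      rintro rfl
      rw [pow_zero] at hcard
      exact absurd hcard (Nat.ne_of_gt (Nat.one_lt_pow m.ne_zero hcprime.one_lt)).symm
    have : c ∣ p ^ h := hcard ▸ dvd_pow_self c m.ne_zero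
    exact (Nat.prime_dvd_prime_iff_eq hcprime hp).mp (hcprime.dvd_of_dvd_pow this)
  have h2 : (2 : F) ≠ 0 := by
    apply Ring.two_ne_zero
    rw [← hc, hcp]
    have := Nat.odd_iff.mp hodd
    omega
  -- a, b with a^2 + b^2 = -1
  obtain ⟨a', b', hab⟩ := CharP.sq_add_sq F c (-1)
  set a : F := (a' : F)
  set b : F := (b' : F)
  push_cast at hab
  set S : Set (Fin n → F) := {x : Fin n → F | x ≠ 0 ∧ (∑ i, x i ^ 2) = 0} with hS
  have key : ∀ k : Fin n, Pi.single k (1 : F) ∈ Submodule.span F S := by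
    intro k
    have hcard2 : 1 < (Finset.univ.erase k).card := by
      rw [Finset.card_erase_of_mem (Finset.mem_univ k), Finset.card_univ, Fintype.card_fin]
      omega
    obtain ⟨i, hi, j, hj, hij⟩ := Finset.one_lt_card.mp hcard2
    have hik : i ≠ k := Finset.ne_of_mem_erase hi
    have hjk : j ≠ k := Finset.ne_of_mem_erase hj
    have vmem : ∀ e : F, e ≠ 0 → e ^ 2 = 1 →
        (Pi.single i a + Pi.single j b + Pi.single k e) ∈ S := by
      intro e he he2
      constructor
      · intro h0
        have := congrFun h0 k
        simp [Pi.single_apply, hik.symm, hjk.symm, he] at this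
      · have hpt : ∀ t, ((Pi.single i a + Pi.single j b + Pi.single k e : Fin n → F)) t ^ 2 =
            (if t = i then a ^ 2 else 0) + (if t = j then b ^ 2 else 0)
              + (if t = k then e ^ 2 else 0) := by
          intro t
          simp only [Pi.add_apply, Pi.single_apply]
          split_ifs <;> simp_all <;> ring
        simp only [hpt, Finset.sum_add_distrib, Finset.sum_ite_eq', Finset.mem_univ, if_true]
        rw [hab, he2]; ring
    have m1 : (Pi.single i a + Pi.single j b + Pi.single k (1:F) : Fin n → F) ∈ Submodule.span F S :=
      Submodule.subset_span (vmem 1 one_ne_zero (one_pow 2))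
    have m2 : (Pi.single i a + Pi.single j b + Pi.single k (-1:F) : Fin n → F) ∈ Submodule.span F S :=
      Submodule.subset_span (vmem (-1) (neg_ne_zero.mpr one_ne_zero) (by ring))
    have heq : Pi.single k (1 : F) = (2:F)⁻¹ •
        ((Pi.single i a + Pi.single j b + Pi.single k (1:F) : Fin n → F)
          - (Pi.single i a + Pi.single j b + Pi.single k (-1:F) : Fin n → F)) := by
      funext t
      simp only [Pi.smul_apply, Pi.sub_apply, Pi.add_apply, Pi.single_apply, smul_eq_mul]
      split_ifs <;> field_simp <;> ring
    rw [heq]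
    exact Submodule.smul_mem _ _ (Submodule.sub_mem _ m1 m2)
  rw [eq_top_iff, ← (Pi.basisFun F (Fin n)).span_eq]
  refine Submodule.span_le.2 ?_
  rintro _ ⟨k, rfl⟩
  simpa using key k
end

section
/- Let p be an odd prime, q = p^h, and n ≥ 3. The set S_− = { x ∈ 𝔽_q^n : Σ_{i=1}^n x_i² is not a square in 𝔽_q } spans 𝔽_q^n as an 𝔽_q-vector space. -/
open Polynomial in
/-- In a finite field of odd cardinality, every element is a sum of two squares. -/
lemma sumTwoSq_aux {F : Type} [Field F] [Fintype F] (hcard : Fintype.card F % 2 = 1)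
    (x : F) : ∃ a b : F, a ^ 2 + b ^ 2 = x := by
  obtain ⟨a, b, hab⟩ := FiniteField.exists_root_sum_quadratic
    (f := (X : F[X]) ^ 2) (g := (X : F[X]) ^ 2 - C x)
    (degree_X_pow 2) (degree_X_pow_sub_C (by norm_num) x) hcard
  refine ⟨a, b, ?_⟩
  rw [← sub_eq_zero]
  simpa only [eval_C, eval_X, eval_pow, eval_sub, ← add_sub_assoc] using hab

/-- Let `p` be an odd prime, `q = p^h`, `n ≥ 3`. The set
`S_- = {x ∈ 𝔽_q^n : ∑ x_i² is not a square in 𝔽_q}` spans `𝔽_q^n` over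
`𝔽_q`. -/
theorem Sminus_spans
    (p h n : ℕ) (hp : p.Prime) (hodd : Odd p) (hn : 3 ≤ n)
    (q : ℕ) (hq : q = p ^ h)
    (F : Type) [Field F] [Fintype F] (hF : Fintype.card F = q) :
    Submodule.span F {x : Fin n → F | ¬ IsSquare (∑ i, x i ^ 2)} = ⊤ := by
  have hcard : Fintype.card F % 2 = 1 := by
    rw [hF, hq]; exact Nat.odd_iff.mp hodd.pow
  have hchar : ringChar F ≠ 2 := by
    intro h2
    have := FiniteField.even_card_of_char_two h2
    omega
  obtain ⟨a, ha⟩ := FiniteField.exists_nonsquare hchar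
  obtain ⟨b, c, hbc⟩ := sumTwoSq_aux hcard a
  have hb : b ≠ 0 := by
    rintro rfl; exact ha ⟨c, by rw [← hbc]; ring⟩
  have hc : c ≠ 0 := by
    rintro rfl; exact ha ⟨b, by rw [← hbc]; ring⟩
  have h2 : (2 : F) ≠ 0 := Ring.two_ne_zero hchar
  haveI : Nontrivial (Fin n) := Fin.nontrivial_iff_two_le.mpr (by omega)
  -- each `Pi.single j 1` lies in the span
  have hsingle : ∀ j : Fin n,
      Pi.single j (1 : F) ∈ Submodule.span F {x : Fin n → F | ¬ IsSquare (∑ i, x i ^ 2)} := by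
    intro j
    obtain ⟨i, hij⟩ := exists_ne j
    have key : ∀ d : F,
        (∑ m, (fun m => if m = i then b else if m = j then d else 0) m ^ 2) = b ^ 2 + d ^ 2 := by
      intro d
      have : ∀ m : Fin n, (fun m => if m = i then b else if m = j then d else 0) m ^ 2 =
          (if m = i then b ^ 2 else 0) + (if m = j then d ^ 2 else 0) := by
        intro m
        rcases eq_or_ne m i with rfl | hmi
        · simp [hij]
        · rcases eq_or_ne m j with rfl | hmj <;> simp [hmi, *]
      simp only [this, Finset.sum_add_distrib, Finset.sum_ite_eq', Finset.mem_univ, if_true]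
    have hu : (fun m => if m = i then b else if m = j then c else 0) ∈
        {x : Fin n → F | ¬ IsSquare (∑ i, x i ^ 2)} := by
      simp only [Set.mem_setOf_eq, key, hbc]; exact ha
    have hu' : (fun m => if m = i then b else if m = j then -c else 0) ∈
        {x : Fin n → F | ¬ IsSquare (∑ i, x i ^ 2)} := by
      simp only [Set.mem_setOf_eq, key]
      rw [show b ^ 2 + (-c) ^ 2 = b ^ 2 + c ^ 2 by ring, hbc]; exact ha
    have hdiff : (fun m => if m = i then b else if m = j then c else 0)
        - (fun m => if m = i then b else if m = j then -c else 0) = Pi.single j (2 * c) := by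
      funext m
      rcases eq_or_ne m i with rfl | hmi
      · simp [Pi.single_apply, hij]
      · rcases eq_or_ne m j with rfl | hmj
        · simp [Pi.single_apply, hmi]; ring
        · simp [Pi.single_apply, hmi, hmj]
    have hmem : Pi.single j (2 * c) ∈
        Submodule.span F {x : Fin n → F | ¬ IsSquare (∑ i, x i ^ 2)} := by
      rw [← hdiff]
      exact sub_mem (Submodule.subset_span hu) (Submodule.subset_span hu')
    have h2c : (2 * c : F) ≠ 0 := mul_ne_zero h2 hc
    have : (Pi.single j (1 : F) : Fin n → F) = (2 * c)⁻¹ • (Pi.single j (2 * c) : Fin n → F) := by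
      funext m
      rcases eq_or_ne m j with rfl | hmj
      · simp only [Pi.single_apply, if_pos rfl, Pi.smul_apply, smul_eq_mul]
        field_simp
        simp
      · simp [Pi.single_apply, hmj]
    rw [this]
    exact Submodule.smul_mem _ _ hmem
  rw [eq_top_iff]
  intro v _
  have hv : v = ∑ j, (v j) • (Pi.single j (1 : F) : Fin n → F) := by
    conv_lhs => rw [← Finset.univ_sum_single v]
    refine Finset.sum_congr rfl fun j _ => ?_
    funext m
    rcases eq_or_ne m j with rfl | hmj
    · simp [Pi.single_apply]
    · simp [Pi.single_apply, hmj]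
  rw [hv]
  exact Submodule.sum_mem _ fun j _ => Submodule.smul_mem _ _ (hsingle j)
end

section
/- Let p be an odd prime, q = p^h, and n ≥ 1. Set ε = 0 if q ≡ 1 (mod 4) and ε = 1 if q ≡ 3 (mod 4). If n is odd, then |S_+| = (1/2)·( q^n − q^{n−1} + (−1)^{ε(n+3)/2}·q^{(n+1)/2} − (−1)^{ε(n−1)/2}·q^{(n−1)/2} ). If n is even, then |S_+| = (1/2)·( q^n − q^{n−1} − (−1)^{εn/2}·q^{n/2} + (−1)^{εn/2}·q^{(n−2)/2} ). -/
open Finset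

section aux

variable {F : Type} [Field F] [Fintype F] [DecidableEq F]

private lemma sum_char_sq (hF2 : ringChar F ≠ 2) :
    ∑ a : F, (quadraticChar F a) ^ 2 = (Fintype.card F : ℤ) - 1 := by
  have h : ∀ a : F, (quadraticChar F a) ^ 2 = 1 - (if a = 0 then (1 : ℤ) else 0) := by
    intro a
    split_ifs with h
    · simp [h]
    · rw [quadraticChar_sq_one h]; ring
  rw [Finset.sum_congr rfl fun a _ => h a, Finset.sum_sub_distrib, Finset.sum_const,
    Finset.sum_ite_eq' Finset.univ (0 : F) (fun _ => (1 : ℤ)), if_pos (Finset.mem_univ _),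
    Finset.card_univ]
  simp

private lemma count1 (hF2 : ringChar F ≠ 2) (c : F) :
    (∑ t : F, if t ^ 2 = c then (1 : ℤ) else 0) = quadraticChar F c + 1 := by
  rw [Finset.sum_boole, ← quadraticChar_card_sqrts hF2 c, Set.toFinset_setOf]

private lemma sq_fiber (hF2 : ringChar F ≠ 2) (f : F → ℤ) :
    ∑ t : F, f (t ^ 2) = ∑ s : F, (quadraticChar F s + 1) * f s := by
  have h1 : ∀ t : F, f (t ^ 2) = ∑ s : F, if t ^ 2 = s then f s else 0 := by
    intro t
    rw [Finset.sum_ite_eq Finset.univ (t ^ 2) f, if_pos (Finset.mem_univ _)]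
  calc ∑ t : F, f (t ^ 2) = ∑ t : F, ∑ s : F, if t ^ 2 = s then f s else 0 :=
        Finset.sum_congr rfl fun t _ => h1 t
    _ = ∑ s : F, ∑ t : F, if t ^ 2 = s then f s else 0 := Finset.sum_comm
    _ = ∑ s : F, (∑ t : F, if t ^ 2 = s then (1 : ℤ) else 0) * f s := by
        refine Finset.sum_congr rfl fun s _ => ?_
        rw [Finset.sum_mul]
        refine Finset.sum_congr rfl fun t _ => ?_
        rw [ite_mul, one_mul, zero_mul]
    _ = ∑ s : F, (quadraticChar F s + 1) * f s := by
        refine Finset.sum_congr rfl fun s _ => ?_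
        rw [count1 hF2]

private lemma sum_shift (hF2 : ringChar F ≠ 2) (c : F) :
    ∑ s : F, quadraticChar F (c - s) = 0 := by
  rw [← quadraticChar_sum_zero hF2]
  exact Fintype.sum_equiv (Equiv.subLeft c) _ _ (fun s => rfl)

private lemma jacobi (hF2 : ringChar F ≠ 2) (c : F) :
    ∑ t : F, quadraticChar F t * quadraticChar F (c - t)
      = quadraticChar F (-1) * (if c = 0 then (Fintype.card F : ℤ) - 1 else -1) := by
  rcases eq_or_ne c 0 with rfl | hc
  · rw [if_pos rfl]
    have h : ∀ t : F, quadraticChar F t * quadraticChar F (0 - t)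
        = quadraticChar F (-1) * (quadraticChar F t) ^ 2 := by
      intro t
      rw [show (0 - t : F) = -1 * t by ring, map_mul]
      ring
    rw [Finset.sum_congr rfl fun t _ => h t, ← Finset.mul_sum, sum_char_sq hF2]
  · rw [if_neg hc]
    have key : ∀ t : F, quadraticChar F t * quadraticChar F (c - t)
        = if t = 0 then 0 else quadraticChar F (t⁻¹ * c - 1) := by
      intro t
      split_ifs with ht
      · simp [ht]
      · have h1 : quadraticChar F t⁻¹ * quadraticChar F t = 1 := by
          rw [← map_mul, inv_mul_cancel₀ ht, map_one]
        have h2 : quadraticChar F t = quadraticChar F t⁻¹ := by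
          calc quadraticChar F t = quadraticChar F t⁻¹ * quadraticChar F t * quadraticChar F t := by
                rw [h1, one_mul]
            _ = quadraticChar F t⁻¹ * (quadraticChar F t) ^ 2 := by ring
            _ = quadraticChar F t⁻¹ := by rw [quadraticChar_sq_one ht, mul_one]
        rw [h2, ← map_mul]
        congr 1
        field_simp
    rw [Finset.sum_congr rfl fun t _ => key t, Finset.sum_ite, Finset.sum_const_zero, zero_add]
    have bij : ∑ t ∈ Finset.univ.filter (fun t : F => ¬t = 0), quadraticChar F (t⁻¹ * c - 1)
        = ∑ u ∈ Finset.univ.filter (fun u : F => ¬u = -1), quadraticChar F u := by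
      refine Finset.sum_bij' (fun t _ => t⁻¹ * c - 1) (fun u _ => (u + 1)⁻¹ * c) ?_ ?_ ?_ ?_ ?_
      · intro t ht
        simp only [Finset.mem_filter, Finset.mem_univ, true_and] at ht ⊢
        intro hcon
        have : t⁻¹ * c = 0 := by linear_combination hcon
        exact hc (by simpa [inv_eq_zero, ht] using mul_eq_zero.mp this)
      · intro u hu
        simp only [Finset.mem_filter, Finset.mem_univ, true_and] at hu ⊢
        have h1 : (u + 1 : F) ≠ 0 := fun h => hu (by linear_combination h)
        exact mul_ne_zero (inv_ne_zero h1) hc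
      · intro t ht
        simp only [Finset.mem_filter, Finset.mem_univ, true_and] at ht
        field_simp
        rw [sub_add_cancel, div_self hc]
      · intro u hu
        simp only [Finset.mem_filter, Finset.mem_univ, true_and] at hu
        have h1 : (u + 1 : F) ≠ 0 := fun h => hu (by linear_combination h)
        field_simp
        ring
      · intro t ht
        rfl
    rw [bij]
    have h3 : Finset.univ.filter (fun u : F => ¬u = -1) = Finset.univ.erase (-1) := by
      ext u
      simp [Finset.mem_erase, and_comm]
    rw [h3, Finset.sum_erase_eq_sub (Finset.mem_univ (-1 : F)), quadraticChar_sum_zero hF2]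
    ring

private def gcnt (F : Type) [Field F] [Fintype F] [DecidableEq F] (n : ℕ) (c : F) : ℤ :=
  ∑ x : Fin n → F, if ∑ i, x i ^ 2 = c then 1 else 0

private lemma gcnt_one (hF2 : ringChar F ≠ 2) (c : F) :
    gcnt F 1 c = quadraticChar F c + 1 := by
  rw [gcnt, ← count1 hF2 c]
  refine Fintype.sum_equiv (Equiv.funUnique (Fin 1) F) _ _ ?_
  intro x
  simp [Fin.sum_univ_one]

private lemma gcnt_succ (hF2 : ringChar F ≠ 2) (n : ℕ) (c : F) :
    gcnt F (n + 1) c = ∑ s : F, (quadraticChar F s + 1) * gcnt F n (c - s) := by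
  have h1 : gcnt F (n + 1) c
      = ∑ p : F × (Fin n → F), if p.1 ^ 2 + ∑ i, p.2 i ^ 2 = c then (1 : ℤ) else 0 := by
    rw [gcnt]
    refine Fintype.sum_equiv (Fin.consEquiv (fun _ : Fin (n + 1) => F)).symm _ _ ?_
    intro x
    simp [Fin.sum_univ_succ, Fin.consEquiv, Fin.tail]
    exact if_congr Iff.rfl rfl rfl
  rw [h1, Fintype.sum_prod_type, ← sq_fiber hF2 (fun s => gcnt F n (c - s))]
  refine Finset.sum_congr rfl fun t _ => ?_
  rw [gcnt]
  refine Finset.sum_congr rfl fun y _ => ?_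
  simp only [eq_sub_iff_add_eq']

private lemma stepA (hF2 : ringChar F ≠ 2) (m : ℕ) (T A : ℤ)
    (H : ∀ c : F, gcnt F m c = T + A * quadraticChar F c) (c : F) :
    gcnt F (m + 1) c = (Fintype.card F : ℤ) * T
      + A * quadraticChar F (-1) * (if c = 0 then (Fintype.card F : ℤ) - 1 else -1) := by
  rw [gcnt_succ hF2]
  have e0 : ∀ s : F, (quadraticChar F s + 1) * gcnt F m (c - s)
      = T * quadraticChar F s + T + A * (quadraticChar F s * quadraticChar F (c - s))
        + A * quadraticChar F (c - s) := by
    intro s; rw [H (c - s)]; ring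
  rw [Finset.sum_congr rfl fun s _ => e0 s, Finset.sum_add_distrib, Finset.sum_add_distrib,
    Finset.sum_add_distrib, ← Finset.mul_sum, ← Finset.mul_sum, ← Finset.mul_sum,
    Finset.sum_const, Finset.card_univ, quadraticChar_sum_zero hF2, jacobi hF2,
    sum_shift hF2]
  push_cast
  ring

private lemma stepB (hF2 : ringChar F ≠ 2) (m : ℕ) (T B : ℤ)
    (H : ∀ c : F, gcnt F m c = T + B * (if c = 0 then (Fintype.card F : ℤ) - 1 else -1)) (c : F) :
    gcnt F (m + 1) c = (Fintype.card F : ℤ) * T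
      + B * (Fintype.card F : ℤ) * quadraticChar F c := by
  rw [gcnt_succ hF2]
  have e0 : ∀ s : F, (quadraticChar F s + 1) * gcnt F m (c - s)
      = T * quadraticChar F s + T
        + B * ((if s = c then (quadraticChar F s + 1) * (Fintype.card F : ℤ) else 0)
          - (quadraticChar F s + 1)) := by
    intro s
    rw [H (c - s)]
    rcases eq_or_ne s c with rfl | hs
    · rw [if_pos (sub_self _), if_pos rfl]; ring
    · rw [if_neg (sub_ne_zero.mpr fun h => hs h.symm), if_neg hs]; ring
  rw [Finset.sum_congr rfl fun s _ => e0 s, Finset.sum_add_distrib, Finset.sum_add_distrib,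
    ← Finset.mul_sum, ← Finset.mul_sum, Finset.sum_const, Finset.card_univ,
    quadraticChar_sum_zero hF2, Finset.sum_sub_distrib,
    Finset.sum_ite_eq' Finset.univ c (fun s => (quadraticChar F s + 1) * (Fintype.card F : ℤ)),
    if_pos (Finset.mem_univ _), Finset.sum_add_distrib, quadraticChar_sum_zero hF2,
    Finset.sum_const, Finset.card_univ]
  push_cast
  ring

private lemma gcnt_eval (hF2 : ringChar F ≠ 2) (k : ℕ) :
    (∀ c : F, gcnt F (2 * k + 1) c = (Fintype.card F : ℤ) ^ (2 * k)
        + (quadraticChar F (-1)) ^ k * (Fintype.card F : ℤ) ^ k * quadraticChar F c)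
    ∧ (∀ c : F, gcnt F (2 * k + 2) c = (Fintype.card F : ℤ) ^ (2 * k + 1)
        + (quadraticChar F (-1)) ^ (k + 1) * (Fintype.card F : ℤ) ^ k
          * (if c = 0 then (Fintype.card F : ℤ) - 1 else -1)) := by
  induction k with
  | zero =>
    have hbase : ∀ c : F, gcnt F 1 c = 1 + 1 * quadraticChar F c := by
      intro c; rw [gcnt_one hF2]; ring
    constructor
    · intro c
      rw [show (2 * 0 + 1 : ℕ) = 1 from rfl, gcnt_one hF2]
      ring
    · intro c
      have := stepA hF2 1 1 1 hbase c
      rw [show (2 * 0 + 2 : ℕ) = 1 + 1 from rfl, this]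
      ring
  | succ k ih =>
    have h1 : ∀ c : F, gcnt F (2 * (k + 1) + 1) c = (Fintype.card F : ℤ) ^ (2 * (k + 1))
        + (quadraticChar F (-1)) ^ (k + 1) * (Fintype.card F : ℤ) ^ (k + 1)
          * quadraticChar F c := by
      intro c
      have := stepB hF2 (2 * k + 2) ((Fintype.card F : ℤ) ^ (2 * k + 1))
        ((quadraticChar F (-1)) ^ (k + 1) * (Fintype.card F : ℤ) ^ k) ih.2 c
      rw [show 2 * (k + 1) + 1 = 2 * k + 2 + 1 by ring, this]
      ring
    refine ⟨h1, ?_⟩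
    intro c
    have := stepA hF2 (2 * (k + 1) + 1) ((Fintype.card F : ℤ) ^ (2 * (k + 1)))
      ((quadraticChar F (-1)) ^ (k + 1) * (Fintype.card F : ℤ) ^ (k + 1)) h1 c
    rw [show 2 * (k + 1) + 2 = 2 * (k + 1) + 1 + 1 by ring, this]
    ring

private lemma sum_comp_gcnt (n : ℕ) (H : F → ℤ) :
    ∑ x : Fin n → F, H (∑ i, x i ^ 2) = ∑ c : F, H c * gcnt F n c := by
  have h1 : ∀ x : Fin n → F, H (∑ i, x i ^ 2)
      = ∑ c : F, if ∑ i, x i ^ 2 = c then H c else 0 := by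
    intro x
    rw [Finset.sum_ite_eq Finset.univ (∑ i, x i ^ 2) H, if_pos (Finset.mem_univ _)]
  rw [Finset.sum_congr rfl fun x _ => h1 x, Finset.sum_comm]
  refine Finset.sum_congr rfl fun c _ => ?_
  rw [gcnt, Finset.mul_sum]
  refine Finset.sum_congr rfl fun x _ => ?_
  rw [mul_ite, mul_one, mul_zero]

end aux

/-- Let `p` be an odd prime, `q = p^h`, `n ≥ 1`, and `ε = 0`
if `q ≡ 1 (mod 4)`, `ε = 1` if `q ≡ 3 (mod 4)`. If `n` is odd then
`|S_+| = ½ (q^n - q^{n-1} + (-1)^{ε(n+3)/2} q^{(n+1)/2} - (-1)^{ε(n-1)/2} q^{(n-1)/2})`;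
if `n` is even then
`|S_+| = ½ (q^n - q^{n-1} - (-1)^{εn/2} q^{n/2} + (-1)^{εn/2} q^{(n-2)/2})`. -/
theorem card_Splus
    (p h n : ℕ) (hp : p.Prime) (hodd : Odd p) (hn : 1 ≤ n)
    (q : ℕ) (hq : q = p ^ h)
    (F : Type) [Field F] [Fintype F] (hF : Fintype.card F = q)
    (ε : ℕ) (hε : ε = if q % 4 = 1 then 0 else 1) :
    (Odd n →
      (2 * ({x : Fin n → F | IsSquare (∑ i, x i ^ 2) ∧ (∑ i, x i ^ 2) ≠ 0}.ncard : ℤ) =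
        (q : ℤ) ^ n - (q : ℤ) ^ (n - 1)
          + (-1 : ℤ) ^ (ε * ((n + 3) / 2)) * (q : ℤ) ^ ((n + 1) / 2)
          - (-1 : ℤ) ^ (ε * ((n - 1) / 2)) * (q : ℤ) ^ ((n - 1) / 2))) ∧
    (Even n →
      (2 * ({x : Fin n → F | IsSquare (∑ i, x i ^ 2) ∧ (∑ i, x i ^ 2) ≠ 0}.ncard : ℤ) =
        (q : ℤ) ^ n - (q : ℤ) ^ (n - 1)
          - (-1 : ℤ) ^ (ε * (n / 2)) * (q : ℤ) ^ (n / 2)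
          + (-1 : ℤ) ^ (ε * (n / 2)) * (q : ℤ) ^ ((n - 2) / 2))) := by
  classical
  have hqodd : Odd q := hq ▸ hodd.pow
  have hF2 : ringChar F ≠ 2 := by
    intro h2
    have hdvd : ringChar F ∣ Fintype.card F := ringChar.dvd (FiniteField.cast_card_eq_zero F)
    rw [h2, hF] at hdvd
    rw [Nat.odd_iff] at hqodd
    omega
  have hchi : quadraticChar F (-1 : F) = (-1 : ℤ) ^ ε := by
    by_cases h4 : q % 4 = 1
    · rw [hε, if_pos h4, pow_zero]
      have hsq : IsSquare (-1 : F) :=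
        FiniteField.isSquare_neg_one_iff.mpr (by rw [hF]; omega)
      exact (quadraticChar_one_iff_isSquare (neg_ne_zero.mpr one_ne_zero)).mpr hsq
    · rw [hε, if_neg h4, pow_one]
      refine quadraticChar_neg_one_iff_not_isSquare.mpr fun hsq => ?_
      have := FiniteField.isSquare_neg_one_iff.mp hsq
      rw [hF] at this
      rw [Nat.odd_iff] at hqodd
      omega
  -- main identity: 2 * ncard = ∑ c, (χ c ^ 2 + χ c) * gcnt F n c
  have hcard : ∀ m : ℕ,
      2 * (({x : Fin m → F | IsSquare (∑ i, x i ^ 2) ∧ (∑ i, x i ^ 2) ≠ 0}.ncard : ℤ))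
        = ∑ c : F, ((quadraticChar F c) ^ 2 + quadraticChar F c) * gcnt F m c := by
    intro m
    rw [← sum_comp_gcnt]
    have h1 : ({x : Fin m → F | IsSquare (∑ i, x i ^ 2) ∧ (∑ i, x i ^ 2) ≠ 0}.ncard : ℤ)
        = ∑ x : Fin m → F,
            if IsSquare (∑ i, x i ^ 2) ∧ (∑ i, x i ^ 2) ≠ 0 then (1 : ℤ) else 0 := by
      rw [Finset.sum_boole, Set.ncard_eq_toFinset_card', Set.toFinset_setOf]
    rw [h1, Finset.mul_sum]
    refine Finset.sum_congr rfl fun x _ => ?_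
    by_cases hx : IsSquare (∑ i, x i ^ 2) ∧ (∑ i, x i ^ 2) ≠ 0
    · rw [if_pos hx, (quadraticChar_one_iff_isSquare hx.2).mpr hx.1]
      norm_num
    · rw [if_neg hx]
      rcases eq_or_ne (∑ i, x i ^ 2) 0 with h0 | h0
      · rw [h0]; simp
      · have hns : ¬IsSquare (∑ i, x i ^ 2) := fun hs => hx ⟨hs, h0⟩
        rw [quadraticChar_neg_one_iff_not_isSquare.mpr hns]
        norm_num
  have S1 : ∑ c : F, ((quadraticChar F c) ^ 2 + quadraticChar F c) = (Fintype.card F : ℤ) - 1 := by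
    rw [Finset.sum_add_distrib, sum_char_sq hF2, quadraticChar_sum_zero hF2, add_zero]
  have S2 : ∑ c : F, ((quadraticChar F c) ^ 2 + quadraticChar F c) * quadraticChar F c
      = (Fintype.card F : ℤ) - 1 := by
    have e : ∀ c : F, ((quadraticChar F c) ^ 2 + quadraticChar F c) * quadraticChar F c
        = quadraticChar F c + (quadraticChar F c) ^ 2 := by
      intro c
      rcases eq_or_ne c 0 with rfl | hc
      · simp
      · have hsq := quadraticChar_sq_one (F := F) hc
        linear_combination quadraticChar F c * hsq
    rw [Finset.sum_congr rfl fun c _ => e c, Finset.sum_add_distrib,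
      quadraticChar_sum_zero hF2, sum_char_sq hF2, zero_add]
  have S3 : ∑ c : F, ((quadraticChar F c) ^ 2 + quadraticChar F c)
        * (if c = 0 then (Fintype.card F : ℤ) - 1 else -1)
      = -((Fintype.card F : ℤ) - 1) := by
    have e : ∀ c : F, ((quadraticChar F c) ^ 2 + quadraticChar F c)
        * (if c = 0 then (Fintype.card F : ℤ) - 1 else -1)
        = -((quadraticChar F c) ^ 2 + quadraticChar F c) := by
      intro c
      rcases eq_or_ne c 0 with rfl | hc
      · simp
      · rw [if_neg hc]; ring
    rw [Finset.sum_congr rfl fun c _ => e c, Finset.sum_neg_distrib, S1]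
  constructor
  · intro hoddn
    obtain ⟨k, rfl⟩ := hoddn
    have e1 : (2 * k + 1) - 1 = 2 * k := by omega
    have e2 : (2 * k + 1 + 3) / 2 = k + 2 := by omega
    have e3 : (2 * k + 1 + 1) / 2 = k + 1 := by omega
    have e4 : (2 * k + 1 - 1) / 2 = k := by omega
    rw [e4, e2, e3, e1, hcard]
    have he := (gcnt_eval hF2 k).1
    have expand : ∑ c : F, ((quadraticChar F c) ^ 2 + quadraticChar F c) * gcnt F (2 * k + 1) c
        = (Fintype.card F : ℤ) ^ (2 * k) * ((Fintype.card F : ℤ) - 1)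
          + (quadraticChar F (-1)) ^ k * (Fintype.card F : ℤ) ^ k * ((Fintype.card F : ℤ) - 1) := by
      have e0 : ∀ c : F, ((quadraticChar F c) ^ 2 + quadraticChar F c) * gcnt F (2 * k + 1) c
          = (Fintype.card F : ℤ) ^ (2 * k) * ((quadraticChar F c) ^ 2 + quadraticChar F c)
            + (quadraticChar F (-1)) ^ k * (Fintype.card F : ℤ) ^ k
              * (((quadraticChar F c) ^ 2 + quadraticChar F c) * quadraticChar F c) := by
        intro c; rw [he c]; ring
      rw [Finset.sum_congr rfl fun c _ => e0 c, Finset.sum_add_distrib, ← Finset.mul_sum,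
        ← Finset.mul_sum, S1, S2]
    rw [expand, hF, hchi]
    have epow : ((-1 : ℤ) ^ ε) ^ k = (-1 : ℤ) ^ (ε * k) := (pow_mul _ _ _).symm
    have epow2 : (-1 : ℤ) ^ (ε * (k + 2)) = (-1 : ℤ) ^ (ε * k) := by
      rw [show ε * (k + 2) = ε * k + 2 * ε by ring, pow_add, pow_mul]
      norm_num
    rw [epow, epow2]
    ring
  · intro hevenn
    obtain ⟨r, hr⟩ := hevenn
    obtain ⟨k, rfl⟩ : ∃ k, r = k + 1 := ⟨r - 1, by omega⟩
    subst hr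
    have e1 : (k + 1 + (k + 1)) - 1 = 2 * k + 1 := by omega
    have e2 : (k + 1 + (k + 1)) / 2 = k + 1 := by omega
    have e3 : ((k + 1 + (k + 1)) - 2) / 2 = k := by omega
    have e5 : k + 1 + (k + 1) = 2 * k + 2 := by omega
    rw [e1, e2, e3, e5, hcard]
    have he := (gcnt_eval hF2 k).2
    have expand : ∑ c : F, ((quadraticChar F c) ^ 2 + quadraticChar F c) * gcnt F (2 * k + 2) c
        = (Fintype.card F : ℤ) ^ (2 * k + 1) * ((Fintype.card F : ℤ) - 1)
          + (quadraticChar F (-1)) ^ (k + 1) * (Fintype.card F : ℤ) ^ k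
            * (-((Fintype.card F : ℤ) - 1)) := by
      have e0 : ∀ c : F, ((quadraticChar F c) ^ 2 + quadraticChar F c) * gcnt F (2 * k + 2) c
          = (Fintype.card F : ℤ) ^ (2 * k + 1) * ((quadraticChar F c) ^ 2 + quadraticChar F c)
            + (quadraticChar F (-1)) ^ (k + 1) * (Fintype.card F : ℤ) ^ k
              * (((quadraticChar F c) ^ 2 + quadraticChar F c)
                * (if c = 0 then (Fintype.card F : ℤ) - 1 else -1)) := by
        intro c; rw [he c]; ring
      rw [Finset.sum_congr rfl fun c _ => e0 c, Finset.sum_add_distrib, ← Finset.mul_sum,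
        ← Finset.mul_sum, S1, S3]
    rw [expand, hF, hchi]
    have epow : ((-1 : ℤ) ^ ε) ^ (k + 1) = (-1 : ℤ) ^ (ε * (k + 1)) := (pow_mul _ _ _).symm
    rw [epow]
    ring
end

section
/- Let p be an odd prime, q = p^h, and n ≥ 1. Set ε = 0 if q ≡ 1 (mod 4) and ε = 1 if q ≡ 3 (mod 4). If n is odd, then |S_−| = (1/2)·( q^n − q^{n−1} − (−1)^{ε(n+3)/2}·q^{(n+1)/2} + (−1)^{ε(n−1)/2}·q^{(n−1)/2} ). If n is even, then |S_−| = (1/2)·( q^n − q^{n−1} − (−1)^{εn/2}·q^{n/2} + (−1)^{εn/2}·q^{(n−2)/2} ). -/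
open Finset

section aux

variable {F : Type} [Field F] [Fintype F] [DecidableEq F]

lemma jacobi_aux (hF2 : ringChar F ≠ 2) {a : F} (ha : a ≠ 0) :
    ∑ s : F, quadraticChar F s * quadraticChar F (s + a) = -1 := by
  have h0 : ∑ s ∈ (univ : Finset F).erase 0,
      quadraticChar F s * quadraticChar F (s + a)
      = ∑ s : F, quadraticChar F s * quadraticChar F (s + a) :=
    Finset.sum_erase _ (by simp)
  rw [← h0]
  have h1 : ∑ s ∈ (univ : Finset F).erase 0,
      quadraticChar F s * quadraticChar F (s + a)
      = ∑ u ∈ (univ : Finset F).erase 1, quadraticChar F u := by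
    refine Finset.sum_nbij' (fun s => 1 + a * s⁻¹) (fun u => a * (u - 1)⁻¹) ?_ ?_ ?_ ?_ ?_
    · intro s hs
      simp only [mem_erase, mem_univ, and_true] at hs ⊢
      intro hcon
      have h1 : a * s⁻¹ = 0 := by
        have := hcon; linear_combination hcon
      rcases mul_eq_zero.mp h1 with h | h
      · exact ha h
      · exact hs (inv_eq_zero.mp h ▸ rfl) |>.elim
    · intro u hu
      simp only [mem_erase, mem_univ, and_true] at hu ⊢
      intro hcon
      rcases mul_eq_zero.mp hcon with h | h
      · exact ha h
      · exact hu (by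
          have : u - 1 = 0 := inv_eq_zero.mp h
          linear_combination this)
    · intro s hs
      simp only [mem_erase, mem_univ, and_true] at hs
      field_simp
      simp [ha]
    · intro u hu
      simp only [mem_erase, mem_univ, and_true] at hu
      have hu1 : u - 1 ≠ 0 := sub_ne_zero.mpr hu
      have ha1 : a * (u - 1)⁻¹ ≠ 0 := mul_ne_zero ha (inv_ne_zero hu1)
      field_simp
      ring
    · intro s hs
      simp only [mem_erase, mem_univ, and_true] at hs
      have key : s + a = s * (1 + a * s⁻¹) := by field_simp
      rw [key, map_mul, ← mul_assoc]
      have : quadraticChar F s * quadraticChar F s = 1 := by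
        rw [← sq]; exact quadraticChar_sq_one hs
      rw [this, one_mul]
  rw [h1]
  have h2 : ∑ u ∈ (univ : Finset F).erase 1, quadraticChar F u
      = (∑ u : F, quadraticChar F u) - quadraticChar F 1 :=
    Finset.sum_erase_eq_sub (by simp)
  rw [h2, quadraticChar_sum_zero hF2, map_one]
  ring

end aux

section aux2

variable {F : Type} [Field F] [Fintype F] [DecidableEq F]

lemma card_sqrts (hF2 : ringChar F ≠ 2) (c : F) :
    ((univ.filter fun t : F => t ^ 2 = c).card : ℤ) = quadraticChar F c + 1 := by
  have := quadraticChar_card_sqrts hF2 c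
  rw [← this]
  congr 1
  rw [Set.toFinset_setOf]

lemma keySum (hF2 : ringChar F ≠ 2) (a : F) :
    ∑ t : F, quadraticChar F (t ^ 2 + a) =
      if a = 0 then (Fintype.card F : ℤ) - 1 else -1 := by
  have hfib : ∑ t : F, quadraticChar F (t ^ 2 + a)
      = ∑ s : F, (quadraticChar F s + 1) * quadraticChar F (s + a) := by
    rw [← Finset.sum_fiberwise' univ (fun t : F => t ^ 2)
      (fun s => quadraticChar F (s + a))]
    refine Finset.sum_congr rfl fun s _ => ?_
    rw [Finset.sum_const, ← card_sqrts hF2 s]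
    push_cast
    ring
  split_ifs with h
  · subst h
    rw [← Finset.sum_erase (a := (0:F)) _ (by simp)]
    have : ∀ t ∈ (univ : Finset F).erase 0, quadraticChar F (t ^ 2 + 0) = 1 := by
      intro t ht
      simp only [mem_erase, mem_univ, and_true] at ht
      rw [add_zero]
      exact quadraticChar_sq_one' ht
    rw [Finset.sum_congr rfl this, Finset.sum_const, Finset.card_erase_of_mem (by simp),
      Finset.card_univ]
    rw [nsmul_eq_mul, mul_one]
    have h1 : 1 ≤ Fintype.card F := Fintype.card_pos
    push_cast
    omega
  · rw [hfib]
    have expand : ∀ s : F, (quadraticChar F s + 1) * quadraticChar F (s + a)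
        = quadraticChar F s * quadraticChar F (s + a) + quadraticChar F (s + a) := by
      intro s; ring
    rw [Finset.sum_congr rfl fun s _ => expand s, Finset.sum_add_distrib,
      jacobi_aux hF2 h]
    have : ∑ s : F, quadraticChar F (s + a) = ∑ s : F, quadraticChar F s :=
      Fintype.sum_equiv (Equiv.addRight a) _ _ (fun s => rfl)
    rw [this, quadraticChar_sum_zero hF2]
    ring

end aux2

noncomputable def TTs (F : Type) [Field F] [Fintype F] [DecidableEq F] (n : ℕ) : ℤ :=
  ∑ x : Fin n → F, quadraticChar F (∑ i, x i ^ 2)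

noncomputable def ZZs (F : Type) [Field F] [Fintype F] [DecidableEq F] (n : ℕ) : ℤ :=
  ∑ x : Fin n → F, if (∑ i, x i ^ 2) = 0 then 1 else 0

section aux3

variable {F : Type} [Field F] [Fintype F] [DecidableEq F]

lemma sum_succ_split (f : F → ℤ) (n : ℕ) :
    (∑ x : Fin (n + 1) → F, f (∑ i, x i ^ 2))
      = ∑ y : Fin n → F, ∑ t : F, f (t ^ 2 + ∑ i, y i ^ 2) := by
  rw [← (Fin.consEquiv (fun _ : Fin (n+1) => F)).sum_comp
    (fun x => f (∑ i, x i ^ 2))]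
  rw [Fintype.sum_prod_type, Finset.sum_comm]
  refine Finset.sum_congr rfl fun y _ => Finset.sum_congr rfl fun t _ => ?_
  congr 1
  simp [Fin.consEquiv, Fin.sum_univ_succ]

lemma TTs_zero : TTs F 0 = 0 := by
  rw [TTs, Fintype.sum_unique]
  simp

lemma ZZs_zero : ZZs F 0 = 1 := by
  rw [ZZs, Fintype.sum_unique]
  simp

lemma TTs_succ (hF2 : ringChar F ≠ 2) (n : ℕ) :
    TTs F (n + 1) = (Fintype.card F : ℤ) * ZZs F n - (Fintype.card F : ℤ) ^ n := by
  rw [TTs, sum_succ_split (fun c => (quadraticChar F c : ℤ)) n]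
  have : ∀ y : Fin n → F, ∑ t : F, (quadraticChar F (t ^ 2 + ∑ i, y i ^ 2) : ℤ)
      = (Fintype.card F : ℤ) * (if (∑ i, y i ^ 2) = 0 then 1 else 0) - 1 := by
    intro y
    rw [keySum hF2]
    split_ifs <;> ring
  rw [Finset.sum_congr rfl fun y _ => this y, Finset.sum_sub_distrib, ← Finset.mul_sum,
    ← ZZs, Finset.sum_const, Finset.card_univ]
  simp [Fintype.card_fun]

lemma ZZs_succ (hF2 : ringChar F ≠ 2) (n : ℕ) :
    ZZs F (n + 1) = (Fintype.card F : ℤ) ^ n + quadraticChar F (-1) * TTs F n := by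
  rw [ZZs, sum_succ_split (fun c => if c = 0 then (1:ℤ) else 0) n]
  have : ∀ y : Fin n → F, (∑ t : F, if (t ^ 2 + ∑ i, y i ^ 2) = 0 then (1:ℤ) else 0)
      = quadraticChar F (-1) * quadraticChar F (∑ i, y i ^ 2) + 1 := by
    intro y
    have h1 : (∑ t : F, if (t ^ 2 + ∑ i, y i ^ 2) = 0 then (1:ℤ) else 0)
        = ((univ.filter fun t : F => t ^ 2 = -(∑ i, y i ^ 2)).card : ℤ) := by
      have heq : ∀ t : F, ((t ^ 2 + ∑ i, y i ^ 2) = 0) ↔ (t ^ 2 = -(∑ i, y i ^ 2)) :=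
        fun t => by constructor <;> intro h <;> linear_combination h
      simp_rw [heq]
      rw [Finset.sum_boole]
    rw [h1, card_sqrts hF2, ← map_mul]
    congr 2
    ring
  rw [Finset.sum_congr rfl fun y _ => this y, Finset.sum_add_distrib, ← Finset.mul_sum,
    ← TTs, Finset.sum_const, Finset.card_univ]
  simp [Fintype.card_fun]
  ring

end aux3

section aux4

variable {F : Type} [Field F] [Fintype F] [DecidableEq F]

lemma TTs_step (hF2 : ringChar F ≠ 2) (n : ℕ) :
    TTs F (n + 2) = quadraticChar F (-1) * (Fintype.card F : ℤ) * TTs F n := by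
  rw [show n + 2 = (n + 1) + 1 from rfl, TTs_succ hF2, ZZs_succ hF2]
  ring

lemma TTs_even (hF2 : ringChar F ≠ 2) (k : ℕ) : TTs F (2 * k) = 0 := by
  induction k with
  | zero => simpa using TTs_zero
  | succ k ih =>
      rw [show 2 * (k + 1) = 2 * k + 2 by ring, TTs_step hF2, ih, mul_zero]

lemma TTs_one (hF2 : ringChar F ≠ 2) : TTs F 1 = (Fintype.card F : ℤ) - 1 := by
  rw [show (1:ℕ) = 0 + 1 from rfl, TTs_succ hF2, ZZs_zero]
  simp

lemma TTs_odd (hF2 : ringChar F ≠ 2) (k : ℕ) :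
    TTs F (2 * k + 1)
      = (quadraticChar F (-1) : ℤ) ^ k * (Fintype.card F : ℤ) ^ k
        * ((Fintype.card F : ℤ) - 1) := by
  induction k with
  | zero => simpa using TTs_one hF2
  | succ k ih =>
      rw [show 2 * (k + 1) + 1 = (2 * k + 1) + 2 by ring, TTs_step hF2, ih]
      ring

lemma two_mul_ncard (hF2 : ringChar F ≠ 2) (n : ℕ) :
    2 * ({x : Fin n → F | ¬ IsSquare (∑ i, x i ^ 2)}.ncard : ℤ)
      = (Fintype.card F : ℤ) ^ n - ZZs F n - TTs F n := by
  have hcard : ({x : Fin n → F | ¬ IsSquare (∑ i, x i ^ 2)}.ncard : ℤ)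
      = ∑ x : Fin n → F, if ¬ IsSquare (∑ i, x i ^ 2) then (1:ℤ) else 0 := by
    rw [Set.ncard_eq_toFinset_card', Set.toFinset_setOf, Finset.sum_boole]
  have hpt : ∀ x : Fin n → F, 2 * (if ¬ IsSquare (∑ i, x i ^ 2) then (1:ℤ) else 0)
      = 1 - (if (∑ i, x i ^ 2) = 0 then (1:ℤ) else 0)
        - quadraticChar F (∑ i, x i ^ 2) := by
    intro x
    set a := ∑ i, x i ^ 2 with ha
    by_cases h0 : a = 0
    · simp [h0]
    · by_cases hsq : IsSquare a
      · rw [(quadraticChar_one_iff_isSquare h0).mpr hsq]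
        simp [hsq, h0]
      · rw [quadraticChar_neg_one_iff_not_isSquare.mpr hsq]
        simp [hsq, h0]
  calc 2 * ({x : Fin n → F | ¬ IsSquare (∑ i, x i ^ 2)}.ncard : ℤ)
      = ∑ x : Fin n → F, 2 * (if ¬ IsSquare (∑ i, x i ^ 2) then (1:ℤ) else 0) := by
        rw [hcard, Finset.mul_sum]
    _ = ∑ x : Fin n → F, (1 - (if (∑ i, x i ^ 2) = 0 then (1:ℤ) else 0)
          - quadraticChar F (∑ i, x i ^ 2)) := Finset.sum_congr rfl fun x _ => hpt x
    _ = (∑ _x : Fin n → F, (1:ℤ)) - ZZs F n - TTs F n := by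
        rw [Finset.sum_sub_distrib, Finset.sum_sub_distrib, ZZs, TTs]
    _ = (Fintype.card F : ℤ) ^ n - ZZs F n - TTs F n := by
        simp [Fintype.card_fun]

end aux4

/-- Let `p` be an odd prime, `q = p^h`, `n ≥ 1`, and `ε = 0`
if `q ≡ 1 (mod 4)`, `ε = 1` if `q ≡ 3 (mod 4)`. If `n` is odd then
`|S_-| = ½ (q^n - q^{n-1} - (-1)^{ε(n+3)/2} q^{(n+1)/2} + (-1)^{ε(n-1)/2} q^{(n-1)/2})`;
if `n` is even then
`|S_-| = ½ (q^n - q^{n-1} - (-1)^{εn/2} q^{n/2} + (-1)^{εn/2} q^{(n-2)/2})`. -/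
theorem card_Sminus
    (p h n : ℕ) (hp : p.Prime) (hodd : Odd p) (hn : 1 ≤ n)
    (q : ℕ) (hq : q = p ^ h)
    (F : Type) [Field F] [Fintype F] (hF : Fintype.card F = q)
    (ε : ℕ) (hε : ε = if q % 4 = 1 then 0 else 1) :
    (Odd n →
      (2 * ({x : Fin n → F | ¬ IsSquare (∑ i, x i ^ 2)}.ncard : ℤ) =
        (q : ℤ) ^ n - (q : ℤ) ^ (n - 1)
          - (-1 : ℤ) ^ (ε * ((n + 3) / 2)) * (q : ℤ) ^ ((n + 1) / 2)
          + (-1 : ℤ) ^ (ε * ((n - 1) / 2)) * (q : ℤ) ^ ((n - 1) / 2))) ∧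
    (Even n →
      (2 * ({x : Fin n → F | ¬ IsSquare (∑ i, x i ^ 2)}.ncard : ℤ) =
        (q : ℤ) ^ n - (q : ℤ) ^ (n - 1)
          - (-1 : ℤ) ^ (ε * (n / 2)) * (q : ℤ) ^ (n / 2)
          + (-1 : ℤ) ^ (ε * (n / 2)) * (q : ℤ) ^ ((n - 2) / 2))) := by
  haveI : DecidableEq F := Classical.decEq F
  have hqodd : Odd q := hq ▸ hodd.pow
  have hF2 : ringChar F ≠ 2 := by
    intro h2
    haveI : CharP F 2 := h2 ▸ ringChar.charP F
    obtain ⟨m, -, hc⟩ := FiniteField.card F 2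
    have hodd2 : Odd (2 ^ (m : ℕ)) := by rw [← hc, hF]; exact hqodd
    have heven : Even ((2:ℕ) ^ (m : ℕ)) := (Nat.even_pow).mpr ⟨even_two, m.pos.ne'⟩
    exact (Nat.not_odd_iff_even.mpr heven) hodd2
  have hcF : (Fintype.card F : ℤ) = (q : ℤ) := by exact_mod_cast hF
  set η : ℤ := quadraticChar F (-1) with hηdef
  have hq4 : q % 4 = 1 ∨ q % 4 = 3 := by
    have := Nat.odd_iff.mp hqodd; omega
  have hη : η = (-1 : ℤ) ^ ε := by
    rw [hηdef, quadraticChar_neg_one hF2, hF]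
    rcases hq4 with h4 | h4
    · rw [ZMod.χ₄_nat_one_mod_four h4, hε, if_pos h4]; norm_num
    · rw [ZMod.χ₄_nat_three_mod_four h4, hε, if_neg (by omega)]; norm_num
  have hη2 : η ^ 2 = 1 := by
    rw [hη, ← pow_mul, mul_comm, pow_mul, neg_one_sq, one_pow]
  have hpow : ∀ m : ℕ, (-1 : ℤ) ^ (ε * m) = η ^ m := fun m => by
    rw [hη, ← pow_mul]
  constructor
  · intro hno
    obtain ⟨k, hk⟩ := hno
    subst hk
    rw [two_mul_ncard hF2]
    have hZ : ZZs F (2 * k + 1) = (q : ℤ) ^ (2 * k) := by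
      rw [ZZs_succ hF2, TTs_even hF2, mul_zero, add_zero, hcF]
    have hT : TTs F (2 * k + 1) = η ^ k * (q : ℤ) ^ k * ((q : ℤ) - 1) := by
      rw [TTs_odd hF2, hcF, hηdef]
    rw [hZ, hT, hcF]
    rw [show (2 * k + 1 + 3) / 2 = k + 2 by omega,
      show (2 * k + 1 + 1) / 2 = k + 1 by omega,
      show (2 * k + 1 - 1) / 2 = k by omega,
      show 2 * k + 1 - 1 = 2 * k by omega,
      hpow, hpow, pow_add η k 2, hη2, mul_one]
    ring
  · intro hne
    obtain ⟨m, hm⟩ : ∃ m, n = 2 * m + 2 := by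
      obtain ⟨k, hk⟩ := hne; exact ⟨k - 1, by omega⟩
    subst hm
    rw [two_mul_ncard hF2]
    have hZ : ZZs F (2 * m + 2) = (q : ℤ) ^ (2 * m + 1)
        + η ^ (m + 1) * (q : ℤ) ^ m * ((q : ℤ) - 1) := by
      rw [show 2 * m + 2 = (2 * m + 1) + 1 from rfl, ZZs_succ hF2, TTs_odd hF2,
        hcF, hηdef, pow_succ]
      ring
    have hT : TTs F (2 * m + 2) = 0 := by
      rw [show 2 * m + 2 = 2 * (m + 1) by ring, TTs_even hF2]
    rw [hZ, hT, hcF]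
    rw [show (2 * m + 2) / 2 = m + 1 by omega,
      show (2 * m + 2 - 2) / 2 = m by omega,
      show 2 * m + 2 - 1 = 2 * m + 1 by omega,
      hpow]
    ring
end
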